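/- (Uhlmann's theorem on convex roofs.) Let G be a nonnegative real-valued function on unit vectors of ℂ^{n} that depends only on the rank-one projector |ψ⟩⟨ψ| (i.e., G(ψ) = G(ψ') whenever |ψ⟩⟨ψ| = |ψ'⟩⟨ψ'|). Define 𝒢 on density matrices by 𝒢(ρ) = inf over pure-state decompositions {p_i, ψ_i} of ρ of Σ_i p_i G(ψ_i). Then: (a) 𝒢 is convex on the set of density matrices; (b) 𝒢(|ψ⟩⟨ψ|) = G(ψ) for every unit vector ψ; and (c) every convex function h on the set of density matrices satisfying h(|ψ⟩⟨ψ|) = G(ψ) for all unit vectors ψ satisfies h(ρ) ≤ 𝒢(ρ) for all density matrices ρ. That is, 𝒢 is the largest convex function agreeing with G on pure states. -/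

import Mathlib

open Matrix
open scoped ComplexOrder

noncomputable section

/-- A density matrix: positive semidefinite with trace one. -/
def IsDensityMatrix {m : Type*} [Fintype m] [DecidableEq m] (ρ : Matrix m m ℂ) : Prop :=
  ρ.PosSemidef ∧ ρ.trace = 1

namespace UhlmannAux

lemma trace_vmv {n : ℕ} (ψ : Fin n → ℂ) : (vecMulVec ψ (star ψ)).trace = star ψ ⬝ᵥ ψ := by
  simp [trace, vecMulVec_apply, Matrix.diag, dotProduct, mul_comm]

lemma unit_dm {n : ℕ} (ψ : Fin n → ℂ) (h : star ψ ⬝ᵥ ψ = 1) :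
    IsDensityMatrix (vecMulVec ψ (star ψ)) := by
  refine ⟨posSemidef_iff_dotProduct_mulVec.mpr ⟨?_, ?_⟩, ?_⟩
  · ext a b; simp [vecMulVec_apply, conjTranspose_apply, mul_comm]
  · intro x
    have e : star x ⬝ᵥ vecMulVec ψ (star ψ) *ᵥ x = (star x ⬝ᵥ ψ) * star (star x ⬝ᵥ ψ) := by
      simp [vecMulVec_apply, mulVec, dotProduct, Finset.mul_sum, Finset.sum_mul, mul_comm,
        mul_assoc, mul_left_comm, star_sum]
      rw [Finset.sum_comm]
    rw [e]
    exact mul_star_self_nonneg _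
  · rw [trace_vmv, h]

lemma udu {n : ℕ} (U : Matrix (Fin n) (Fin n) ℂ) (d : Fin n → ℂ) :
    U * diagonal d * star U = ∑ i, d i • vecMulVec (fun a => U a i) (star fun a => U a i) := by
  ext a b
  simp [mul_apply, diagonal, vecMulVec_apply, Matrix.sum_apply, mul_comm, mul_assoc, mul_left_comm]

lemma exists_pure_decomp {n : ℕ} (ρ : Matrix (Fin n) (Fin n) ℂ) (hρ : IsDensityMatrix ρ) :
    ∃ (m : ℕ) (p : Fin m → ℝ) (ψ : Fin m → (Fin n → ℂ)),
      (∀ i, 0 < p i) ∧ (∑ i, p i = 1) ∧ (∀ i, star (ψ i) ⬝ᵥ ψ i = 1) ∧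
      ρ = ∑ i, (p i : ℂ) • Matrix.vecMulVec (ψ i) (star (ψ i)) := by
  classical
  have hH : ρ.IsHermitian := hρ.1.1
  set U : Matrix (Fin n) (Fin n) ℂ := (hH.eigenvectorUnitary : Matrix (Fin n) (Fin n) ℂ) with hU
  set d : Fin n → ℝ := hH.eigenvalues with hd
  have hcolunit : ∀ i, star (fun a => U a i) ⬝ᵥ (fun a => U a i) = 1 := by
    intro i
    have h1 : star U * U = 1 := (Matrix.mem_unitaryGroup_iff').mp hH.eigenvectorUnitary.2
    have := congrFun (congrFun h1 i) i
    simpa [mul_apply, dotProduct, Matrix.one_apply] using this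
  have hspec : ρ = ∑ i, ((d i : ℂ)) • vecMulVec (fun a => U a i) (star fun a => U a i) := by
    rw [← udu]
    exact hH.spectral_theorem
  have hdnonneg : ∀ i, 0 ≤ d i := hρ.1.eigenvalues_nonneg
  have hdsum : ∑ i, d i = 1 := by
    have : ρ.trace = ∑ i, (d i : ℂ) := by
      rw [hspec]
      simp only [Matrix.trace_sum, Matrix.trace_smul, trace_vmv, hcolunit, smul_eq_mul, mul_one]
    rw [hρ.2] at this
    have := this.symm
    exact_mod_cast this
  let s := {i : Fin n // d i ≠ 0}
  let e : Fin (Fintype.card s) ≃ s := (Fintype.equivFin s).symm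
  refine ⟨Fintype.card s, fun k => d (e k), fun k a => U a (e k), ?_, ?_, fun k => hcolunit _, ?_⟩
  · exact fun k => lt_of_le_of_ne (hdnonneg _) (Ne.symm (e k).2)
  · rw [Equiv.sum_comp e (fun i : s => d i), ← hdsum,
      ← Finset.sum_subtype (Finset.univ.filter fun i => d i ≠ 0)
        (by simp) (fun i => d i), Finset.sum_filter_ne_zero]
  · rw [hspec,
      Equiv.sum_comp e (fun i : s => ((d i : ℂ)) • vecMulVec (fun a => U a i) (star fun a => U a i)),
      ← Finset.sum_subtype (Finset.univ.filter fun i => d i ≠ 0) (by simp)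
        (fun i => ((d i : ℂ)) • vecMulVec (fun a => U a i) (star fun a => U a i)),
      Finset.sum_filter_of_ne]
    intro i _ hne hzero
    exact hne (by simp [hzero])

lemma sandwich {n : ℕ} (a b : Fin n → ℂ) :
    star b ⬝ᵥ (vecMulVec a (star a) *ᵥ b) = (Complex.normSq (star a ⬝ᵥ b) : ℂ) := by
  have : star b ⬝ᵥ (vecMulVec a (star a) *ᵥ b) = (star b ⬝ᵥ a) * (star a ⬝ᵥ b) := by
    simp [vecMulVec_apply, mulVec, dotProduct, Finset.mul_sum, Finset.sum_mul, mul_comm,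
      mul_assoc, mul_left_comm]
    rw [Finset.sum_comm]
  rw [this]
  rw [show star b ⬝ᵥ a = (starRingEnd ℂ) (star a ⬝ᵥ b) by
    simp [dotProduct, map_sum, mul_comm]]
  rw [Complex.normSq_eq_conj_mul_self]

lemma norm_one_of_unit {n : ℕ} (a : Fin n → ℂ) (h : star a ⬝ᵥ a = 1) :
    ‖(WithLp.equiv 2 (Fin n → ℂ)).symm a‖ = 1 := by
  have h1 : inner ℂ ((WithLp.equiv 2 (Fin n → ℂ)).symm a) ((WithLp.equiv 2 (Fin n → ℂ)).symm a)
      = (1 : ℂ) := by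
    rw [(show ∀ x y : Fin n → ℂ, inner ℂ ((WithLp.equiv 2 (Fin n → ℂ)).symm x) ((WithLp.equiv 2 (Fin n → ℂ)).symm y) = star x ⬝ᵥ y from fun x y => by rw [dotProduct_comm]; rfl), h]
  have h2 := inner_self_eq_norm_sq_to_K (𝕜 := ℂ) ((WithLp.equiv 2 (Fin n → ℂ)).symm a)
  rw [h1] at h2
  have h3 : (‖(WithLp.equiv 2 (Fin n → ℂ)).symm a‖ : ℝ) ^ 2 = 1 := by
    have h4 := congrArg Complex.re h2.symm
    norm_cast at h4
  nlinarith [norm_nonneg ((WithLp.equiv 2 (Fin n → ℂ)).symm a)]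

lemma pure_rigid {n : ℕ} (ψ : Fin n → ℂ) (hψ : star ψ ⬝ᵥ ψ = 1)
    {m : ℕ} (p : Fin m → ℝ) (χ : Fin m → (Fin n → ℂ))
    (hp : ∀ i, 0 < p i) (hps : ∑ i, p i = 1) (hχ : ∀ i, star (χ i) ⬝ᵥ χ i = 1)
    (hdec : vecMulVec ψ (star ψ) = ∑ i, (p i : ℂ) • vecMulVec (χ i) (star (χ i))) :
    ∀ i, vecMulVec (χ i) (star (χ i)) = vecMulVec ψ (star ψ) := by
  classical
  set c : Fin m → ℂ := fun i => star (χ i) ⬝ᵥ ψ with hc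
  have key : (1 : ℂ) = ∑ i, (p i : ℂ) * (Complex.normSq (c i) : ℂ) := by
    have h1 : star ψ ⬝ᵥ (vecMulVec ψ (star ψ) *ᵥ ψ) = 1 := by
      rw [sandwich, hψ]; simp
    have h2 : star ψ ⬝ᵥ (vecMulVec ψ (star ψ) *ᵥ ψ)
        = ∑ i, (p i : ℂ) * (Complex.normSq (c i) : ℂ) := by
      rw [hdec]
      rw [show (∑ i, (p i : ℂ) • vecMulVec (χ i) (star (χ i))) *ᵥ ψ
          = ∑ i, ((p i : ℂ) • vecMulVec (χ i) (star (χ i))) *ᵥ ψ from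
        map_sum (Matrix.mulVec.addMonoidHomLeft ψ) _ _]
      rw [show star ψ ⬝ᵥ (∑ i, ((p i : ℂ) • vecMulVec (χ i) (star (χ i))) *ᵥ ψ)
          = ∑ i, star ψ ⬝ᵥ (((p i : ℂ) • vecMulVec (χ i) (star (χ i))) *ᵥ ψ) by
        simp only [dotProduct, Finset.sum_apply, Finset.mul_sum]
        exact Finset.sum_comm]
      refine Finset.sum_congr rfl fun i _ => ?_
      rw [Matrix.smul_mulVec, dotProduct_smul, sandwich]
      simp [smul_eq_mul, hc]
    rw [← h1, h2]
  have keyR : (1 : ℝ) = ∑ i, p i * Complex.normSq (c i) := by exact_mod_cast key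
  have hcs : ∀ i, Complex.normSq (c i) ≤ 1 := by
    intro i
    have := norm_inner_le_norm (𝕜 := ℂ) ((WithLp.equiv 2 (Fin n → ℂ)).symm (χ i))
      ((WithLp.equiv 2 (Fin n → ℂ)).symm ψ)
    rw [(show ∀ x y : Fin n → ℂ, inner ℂ ((WithLp.equiv 2 (Fin n → ℂ)).symm x) ((WithLp.equiv 2 (Fin n → ℂ)).symm y) = star x ⬝ᵥ y from fun x y => by rw [dotProduct_comm]; rfl), norm_one_of_unit _ (hχ i),
      norm_one_of_unit _ hψ] at this
    have h4 : ‖c i‖ ≤ 1 := by simpa using this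
    have : Complex.normSq (c i) = ‖c i‖ ^ 2 := (Complex.sq_norm _).symm
    nlinarith [norm_nonneg (c i)]
  have heq : ∀ i, Complex.normSq (c i) = 1 := by
    intro i
    have hzero : ∑ j, p j * (1 - Complex.normSq (c j)) = 0 := by
      simp only [mul_sub, mul_one]
      rw [Finset.sum_sub_distrib, hps, ← keyR]
      ring
    have h6 := (Finset.sum_eq_zero_iff_of_nonneg (fun j _ =>
      mul_nonneg (hp j).le (by linarith [hcs j]))).mp hzero i (Finset.mem_univ i)
    rcases mul_eq_zero.mp h6 with h | h
    · exact absurd h (hp i).ne'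
    · linarith
  intro i
  have hne1 : (WithLp.equiv 2 (Fin n → ℂ)).symm (χ i) ≠ 0 := by
    intro h; have := norm_one_of_unit _ (hχ i); rw [h] at this; simp at this
  have hne2 : (WithLp.equiv 2 (Fin n → ℂ)).symm ψ ≠ 0 := by
    intro h; have := norm_one_of_unit _ hψ; rw [h] at this; simp at this
  have hnormeq : ‖inner ((WithLp.equiv 2 (Fin n → ℂ)).symm (χ i))
        ((WithLp.equiv 2 (Fin n → ℂ)).symm ψ) (𝕜 := ℂ)‖
      = ‖(WithLp.equiv 2 (Fin n → ℂ)).symm (χ i)‖ * ‖(WithLp.equiv 2 (Fin n → ℂ)).symm ψ‖ := by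
    rw [norm_one_of_unit _ (hχ i), norm_one_of_unit _ hψ, (show ∀ x y : Fin n → ℂ, inner ℂ ((WithLp.equiv 2 (Fin n → ℂ)).symm x) ((WithLp.equiv 2 (Fin n → ℂ)).symm y) = star x ⬝ᵥ y from fun x y => by rw [dotProduct_comm]; rfl)]
    have h8 := heq i
    rw [← Complex.sq_norm] at h8
    have h7 : ‖c i‖ ^ 2 = 1 := by simpa using h8
    nlinarith [norm_nonneg (c i)]
  obtain ⟨r, hr0, hr⟩ := (norm_inner_eq_norm_iff hne1 hne2).mp hnormeq
  have hψeq : ψ = r • χ i := by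
    have := congrArg (WithLp.equiv 2 (Fin n → ℂ)) hr
    simpa using this
  have hrnorm : Complex.normSq r = 1 := by
    have h5 := norm_one_of_unit _ hψ
    rw [hr, norm_smul, norm_one_of_unit _ (hχ i), mul_one] at h5
    rw [Complex.normSq_eq_norm_sq, h5]
    norm_num
  ext a b
  have hrr : r * (starRingEnd ℂ) r = 1 := by
    rw [Complex.mul_conj]; exact_mod_cast hrnorm
  simp only [vecMulVec_apply, hψeq, Pi.smul_apply, Pi.star_apply, smul_eq_mul, star_mul',
    Complex.star_def]
  linear_combination (-(χ i a * (starRingEnd ℂ) (χ i b))) * hrr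

lemma dm_convex {n : ℕ} {x y : Matrix (Fin n) (Fin n) ℂ} (hx : IsDensityMatrix x)
    (hy : IsDensityMatrix y) {a b : ℝ} (ha : 0 ≤ a) (hb : 0 ≤ b) (hab : a + b = 1) :
    IsDensityMatrix ((a : ℂ) • x + (b : ℂ) • y) := by
  refine ⟨posSemidef_iff_dotProduct_mulVec.mpr ⟨?_, ?_⟩, ?_⟩
  · have h1 := hx.1.1
    have h2 := hy.1.1
    unfold Matrix.IsHermitian at *
    rw [conjTranspose_add, conjTranspose_smul, conjTranspose_smul, h1, h2]
    simp [Complex.conj_ofReal]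
  · intro z
    rw [Matrix.add_mulVec, dotProduct_add, Matrix.smul_mulVec, Matrix.smul_mulVec,
      dotProduct_smul, dotProduct_smul]
    have hxa : (0 : ℂ) ≤ (a : ℂ) • (star z ⬝ᵥ x *ᵥ z) := by
      rw [smul_eq_mul]
      exact mul_nonneg (by exact_mod_cast ha) (hx.1.dotProduct_mulVec_nonneg z)
    have hyb : (0 : ℂ) ≤ (b : ℂ) • (star z ⬝ᵥ y *ᵥ z) := by
      rw [smul_eq_mul]
      exact mul_nonneg (by exact_mod_cast hb) (hy.1.dotProduct_mulVec_nonneg z)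
    exact add_nonneg hxa hyb
  · rw [Matrix.trace_add, Matrix.trace_smul, Matrix.trace_smul, hx.2, hy.2]
    simp only [smul_eq_mul, mul_one]
    exact_mod_cast congrArg (fun r : ℝ => (r : ℂ)) hab

end UhlmannAux

open UhlmannAux in
/-- **Uhlmann's theorem on convex roofs.** If G is a nonnegative function on unit vectors of ℂⁿ
depending only on the projector |ψ⟩⟨ψ|, then the convex roof 𝒢(ρ) = inf Σᵢ pᵢ G(ψᵢ) over
pure-state decompositions of ρ is (a) convex on density matrices, (b) agrees with G on pure
states, and (c) dominates every convex function agreeing with G on pure states. -/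
theorem uhlmann_convex_roof {n : ℕ} (G : (Fin n → ℂ) → ℝ)
    (hGnonneg : ∀ ψ : Fin n → ℂ, star ψ ⬝ᵥ ψ = 1 → 0 ≤ G ψ)
    (hGproj : ∀ ψ ψ' : Fin n → ℂ,
      Matrix.vecMulVec ψ (star ψ) = Matrix.vecMulVec ψ' (star ψ') → G ψ = G ψ')
    (𝒢 : Matrix (Fin n) (Fin n) ℂ → ℝ)
    (h𝒢 : ∀ ρ, 𝒢 ρ = sInf { t | ∃ (m : ℕ) (p : Fin m → ℝ) (ψ : Fin m → (Fin n → ℂ)),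
      (∀ i, 0 < p i) ∧ (∑ i, p i = 1) ∧ (∀ i, star (ψ i) ⬝ᵥ ψ i = 1) ∧
      ρ = ∑ i, (p i : ℂ) • Matrix.vecMulVec (ψ i) (star (ψ i)) ∧
      t = ∑ i, p i * G (ψ i) }) :
    (∀ ρ₁ ρ₂ : Matrix (Fin n) (Fin n) ℂ, IsDensityMatrix ρ₁ → IsDensityMatrix ρ₂ →
      ∀ t : ℝ, 0 ≤ t → t ≤ 1 →
        𝒢 ((t : ℂ) • ρ₁ + ((1 - t : ℝ) : ℂ) • ρ₂) ≤ t * 𝒢 ρ₁ + (1 - t) * 𝒢 ρ₂)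
    ∧ (∀ ψ : Fin n → ℂ, star ψ ⬝ᵥ ψ = 1 → 𝒢 (Matrix.vecMulVec ψ (star ψ)) = G ψ)
    ∧ (∀ h : Matrix (Fin n) (Fin n) ℂ → ℝ,
        (∀ ρ₁ ρ₂ : Matrix (Fin n) (Fin n) ℂ, IsDensityMatrix ρ₁ → IsDensityMatrix ρ₂ →
          ∀ t : ℝ, 0 ≤ t → t ≤ 1 →
            h ((t : ℂ) • ρ₁ + ((1 - t : ℝ) : ℂ) • ρ₂) ≤ t * h ρ₁ + (1 - t) * h ρ₂) →
        (∀ ψ : Fin n → ℂ, star ψ ⬝ᵥ ψ = 1 → h (Matrix.vecMulVec ψ (star ψ)) = G ψ) →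
        ∀ ρ, IsDensityMatrix ρ → h ρ ≤ 𝒢 ρ) := by
  classical
  set S : Matrix (Fin n) (Fin n) ℂ → Set ℝ := fun ρ =>
    { t | ∃ (m : ℕ) (p : Fin m → ℝ) (ψ : Fin m → (Fin n → ℂ)),
      (∀ i, 0 < p i) ∧ (∑ i, p i = 1) ∧ (∀ i, star (ψ i) ⬝ᵥ ψ i = 1) ∧
      ρ = ∑ i, (p i : ℂ) • Matrix.vecMulVec (ψ i) (star (ψ i)) ∧
      t = ∑ i, p i * G (ψ i) } with hS
  have hbdd : ∀ ρ, BddBelow (S ρ) := by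
    intro ρ
    refine ⟨0, fun tval htval => ?_⟩
    obtain ⟨m, p, ψ, hp, _, hpu, _, hpe⟩ := htval
    rw [hpe]
    exact Finset.sum_nonneg fun i _ => mul_nonneg (hp i).le (hGnonneg _ (hpu i))
  have hmem : ∀ ρ, IsDensityMatrix ρ → (S ρ).Nonempty := by
    intro ρ hρ
    obtain ⟨m, p, ψ, hp, hps, hpu, hpd⟩ := exists_pure_decomp ρ hρ
    exact ⟨∑ i, p i * G (ψ i), m, p, ψ, hp, hps, hpu, hpd, rfl⟩
  have hG' : ∀ ρ, 𝒢 ρ = sInf (S ρ) := h𝒢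
  -- lower bound via Jensen for any convex h agreeing on pure states
  have jensen : ∀ h : Matrix (Fin n) (Fin n) ℂ → ℝ,
      (∀ ρ₁ ρ₂ : Matrix (Fin n) (Fin n) ℂ, IsDensityMatrix ρ₁ → IsDensityMatrix ρ₂ →
        ∀ t : ℝ, 0 ≤ t → t ≤ 1 →
          h ((t : ℂ) • ρ₁ + ((1 - t : ℝ) : ℂ) • ρ₂) ≤ t * h ρ₁ + (1 - t) * h ρ₂) →
      (∀ ψ : Fin n → ℂ, star ψ ⬝ᵥ ψ = 1 → h (Matrix.vecMulVec ψ (star ψ)) = G ψ) →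
      ∀ ρ, IsDensityMatrix ρ → h ρ ≤ 𝒢 ρ := by
    intro h hconv hagree ρ hρ
    rw [hG']
    refine le_csInf (hmem ρ hρ) ?_
    rintro tval ⟨m, p, ψ, hp, hps, hpu, hpd, hpe⟩
    have hconvOn : ConvexOn ℝ {σ : Matrix (Fin n) (Fin n) ℂ | IsDensityMatrix σ} h := by
      constructor
      · intro x hx y hy a b ha hb hab
        have := dm_convex hx hy ha hb hab
        simpa [Complex.coe_smul] using this
      · intro x hx y hy a b ha hb hab
        have h1 : b = 1 - a := by linarith
        have h2 := hconv x y hx hy a ha (by linarith)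
        rw [← h1] at h2
        simpa [Complex.coe_smul] using h2
    have hsum : ρ = ∑ i, p i • Matrix.vecMulVec (ψ i) (star (ψ i)) := by
      rw [hpd]
      exact Finset.sum_congr rfl fun i _ => by rw [Complex.coe_smul]
    have hj := hconvOn.map_sum_le (t := Finset.univ) (w := p)
      (p := fun i => Matrix.vecMulVec (ψ i) (star (ψ i)))
      (fun i _ => (hp i).le) hps (fun i _ => unit_dm _ (hpu i))
    rw [← hsum] at hj
    rw [hpe]
    refine hj.trans (le_of_eq ?_)
    exact Finset.sum_congr rfl fun i _ => by rw [smul_eq_mul, hagree _ (hpu i)]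
  refine ⟨?_, ?_, jensen⟩
  · -- (a) convexity
    intro ρ₁ ρ₂ hρ₁ hρ₂ t ht0 ht1
    rcases eq_or_lt_of_le ht0 with h0 | h0
    · rw [← h0]
      have : ((0 : ℝ) : ℂ) • ρ₁ + ((1 - 0 : ℝ) : ℂ) • ρ₂ = ρ₂ := by norm_num
      rw [this]
      norm_num
    rcases eq_or_lt_of_le ht1 with h1 | h1
    · rw [h1]
      have : ((1 : ℝ) : ℂ) • ρ₁ + ((1 - 1 : ℝ) : ℂ) • ρ₂ = ρ₁ := by norm_num
      rw [this]
      norm_num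
    have h1t : 0 < 1 - t := by linarith
    set mix := (t : ℂ) • ρ₁ + ((1 - t : ℝ) : ℂ) • ρ₂ with hmix
    have hcomb : ∀ a ∈ S ρ₁, ∀ b ∈ S ρ₂, 𝒢 mix ≤ t * a + (1 - t) * b := by
      rintro a ⟨m₁, p, ψ, hp, hps, hpu, hpd, hpe⟩ b ⟨m₂, q, φ, hq, hqs, hqu, hqd, hqe⟩
      have hmemmix : t * a + (1 - t) * b ∈ S mix := by
        refine ⟨m₁ + m₂, Fin.append (fun i => t * p i) (fun j => (1 - t) * q j),
          Fin.append ψ φ, ?_, ?_, ?_, ?_, ?_⟩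
        · intro i
          refine Fin.addCases (fun j => ?_) (fun j => ?_) i
          · rw [Fin.append_left]; exact mul_pos h0 (hp j)
          · rw [Fin.append_right]; exact mul_pos h1t (hq j)
        · rw [Fin.sum_univ_add]
          simp only [Fin.append_left, Fin.append_right, ← Finset.mul_sum, hps, hqs]
          ring
        · intro i
          refine Fin.addCases (fun j => ?_) (fun j => ?_) i
          · rw [Fin.append_left]; exact hpu j
          · rw [Fin.append_right]; exact hqu j
        · rw [Fin.sum_univ_add]
          simp only [Fin.append_left, Fin.append_right]
          rw [hmix, hpd, hqd, Finset.smul_sum, Finset.smul_sum]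
          congr 1
          · exact Finset.sum_congr rfl fun i _ => by push_cast; rw [smul_smul]
          · exact Finset.sum_congr rfl fun j _ => by push_cast; rw [smul_smul]
        · rw [Fin.sum_univ_add]
          simp only [Fin.append_left, Fin.append_right]
          rw [hpe, hqe, Finset.mul_sum, Finset.mul_sum]
          congr 1 <;> exact Finset.sum_congr rfl fun i _ => by ring
      rw [hG']
      exact csInf_le (hbdd mix) hmemmix
    have step1 : ∀ b ∈ S ρ₂, 𝒢 mix ≤ t * 𝒢 ρ₁ + (1 - t) * b := by
      intro b hb
      have hle : (𝒢 mix - (1 - t) * b) / t ≤ 𝒢 ρ₁ := by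
        rw [hG' ρ₁]
        refine le_csInf (hmem ρ₁ hρ₁) ?_
        intro a ha
        rw [div_le_iff₀ h0]
        have := hcomb a ha b hb
        nlinarith
      rw [div_le_iff₀ h0] at hle
      nlinarith
    have step2 : (𝒢 mix - t * 𝒢 ρ₁) / (1 - t) ≤ 𝒢 ρ₂ := by
      rw [hG' ρ₂]
      refine le_csInf (hmem ρ₂ hρ₂) ?_
      intro b hb
      rw [div_le_iff₀ h1t]
      have := step1 b hb
      nlinarith
    rw [div_le_iff₀ h1t] at step2
    nlinarith
  · -- (b) agreement on pure states
    intro ψ hψ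
    rw [hG']
    have hmemb : G ψ ∈ S (Matrix.vecMulVec ψ (star ψ)) := by
      refine ⟨1, fun _ => 1, fun _ => ψ, fun _ => one_pos, by simp, fun _ => hψ, by simp, by simp⟩
    refine le_antisymm (csInf_le (hbdd _) hmemb) (le_csInf ⟨G ψ, hmemb⟩ ?_)
    rintro tval ⟨m, p, χ, hp, hps, hpu, hpd, hpe⟩
    have hrig := pure_rigid ψ hψ p χ hp hps hpu hpd
    rw [hpe]
    have : ∀ i, G (χ i) = G ψ := fun i => hGproj _ _ (hrig i)
    calc G ψ = (∑ i, p i) * G ψ := by rw [hps, one_mul]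
      _ = ∑ i, p i * G ψ := by rw [Finset.sum_mul]
      _ ≤ ∑ i, p i * G (χ i) := by
          refine Finset.sum_le_sum fun i _ => ?_
          rw [this i]
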